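/- If the dl-program K = (O,P) mentions no occurrence of the constraining operator ⊖ (so all dl-atoms in P are monotonic), then an interpretation I ⊆ HB_P is a canonical answer set of K if and only if I is a strong answer set of K. -/

import Mathlib

namespace DLP

/-- The three dl-atom input operators ⊕, ⊙, ⊖. -/
inductive Op | oplus | odot | ominus

/-- An abstract dl-atom `DL[S₁ op₁ p₁, …; Q](t)`: a list of inputs together with
the entailment check `O ∪ A ⊨ Q(t)` applied to a set of (possibly negated) assertions. -/
structure DLA (Conc Pred Arg : Type) where
  inputs : List (Conc × Op × Pred)
  entails : Set (Conc × Arg × Bool) → Prop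

variable {Conc Pred Arg : Type}

/-- Atoms of the Herbrand base: predicate applied to an argument tuple. -/
abbrev Atom (Pred Arg : Type) := Pred × Arg

/-- Interpretations are subsets of the Herbrand base. -/
abbrev Interp (Pred Arg : Type) := Set (Atom Pred Arg)

/-- Extension of a predicate under an interpretation. -/
def extOf (I : Interp Pred Arg) : Pred → Set Arg := fun p => {e | (p, e) ∈ I}

/-- The assertions contributed by one input entry, given predicate extensions. -/
def contrib (ext : Pred → Set Arg) : Conc × Op × Pred → Set (Conc × Arg × Bool)
  | (S, Op.oplus, p) => {x | ∃ e ∈ ext p, x = (S, e, true)}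
  | (S, Op.odot, p) => {x | ∃ e ∈ ext p, x = (S, e, false)}
  | (S, Op.ominus, p) => {x | ∃ e, e ∉ ext p ∧ x = (S, e, false)}

/-- Evaluate a dl-atom on given predicate extensions. -/
def DLA.eval (A : DLA Conc Pred Arg) (ext : Pred → Set Arg) : Prop :=
  A.entails {x | ∃ c ∈ A.inputs, x ∈ contrib ext c}

/-- `I ⊨_O A` for a dl-atom `A`. -/
def DLA.sat (A : DLA Conc Pred Arg) (I : Interp Pred Arg) : Prop := A.eval (extOf I)

/-- A dl-atom is monotonic (relative to the program) if `I ⊨_O A` and `I ⊆ I'` imply `I' ⊨_O A`. -/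
def DLA.Mono (A : DLA Conc Pred Arg) : Prop :=
  ∀ ⦃I J : Interp Pred Arg⦄, I ⊆ J → A.sat I → A.sat J

/-- A body element: an ordinary atom or a dl-atom. -/
abbrev BodyElem (Conc Pred Arg : Type) := Atom Pred Arg ⊕ DLA Conc Pred Arg

/-- Satisfaction of a body element: membership for atoms, dl-satisfaction for dl-atoms. -/
def satB (I : Interp Pred Arg) : BodyElem Conc Pred Arg → Prop
  | Sum.inl a => a ∈ I
  | Sum.inr d => d.sat I

/-- A dl-rule `head ← Pos, not Neg`. -/
structure Rule (Conc Pred Arg : Type) where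
  head : Atom Pred Arg
  pos : Set (BodyElem Conc Pred Arg)
  neg : Set (BodyElem Conc Pred Arg)

/-- A dl-program: a set of dl-rules (the ontology `O` is folded into the
entailment relation carried by each dl-atom). -/
structure Prog (Conc Pred Arg : Type) where
  rules : Set (Rule Conc Pred Arg)

/-- `I` satisfies the body of rule `r` relative to `O`. -/
def satBody (I : Interp Pred Arg) (r : Rule Conc Pred Arg) : Prop :=
  (∀ b ∈ r.pos, satB I b) ∧ (∀ b ∈ r.neg, ¬ satB I b)

/-- `I` is a model of the dl-program. -/
def isModel (P : Prog Conc Pred Arg) (I : Interp Pred Arg) : Prop :=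
  ∀ r ∈ P.rules, satBody I r → r.head ∈ I

/-- `I` is a supported model of the dl-program. -/
def Supported (P : Prog Conc Pred Arg) (I : Interp Pred Arg) : Prop :=
  isModel P I ∧ ∀ h ∈ I, ∃ r ∈ P.rules, r.head = h ∧ satBody I r

/-- `I` satisfies the completion `COMP(K)` relative to `O`. -/
def satComp (P : Prog Conc Pred Arg) (I : Interp Pred Arg) : Prop :=
  ∀ h : Atom Pred Arg, h ∈ I ↔ ∃ r ∈ P.rules, r.head = h ∧ satBody I r

/-- A positive dl-program: no negation as failure, and all occurring dl-atoms monotonic. -/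
def Positive (P : Prog Conc Pred Arg) : Prop :=
  (∀ r ∈ P.rules, r.neg = (∅ : Set (BodyElem Conc Pred Arg))) ∧
  (∀ r ∈ P.rules, ∀ d : DLA Conc Pred Arg, Sum.inr d ∈ r.pos ∪ r.neg → d.Mono)

/-- One-step consequence operator `γ_K`. -/
def gamma (P : Prog Conc Pred Arg) (J : Interp Pred Arg) : Interp Pred Arg :=
  {h | ∃ r ∈ P.rules, r.head = h ∧ ∀ b ∈ r.pos, satB J b}

/-- Least fixed point of the one-step consequence operator (Knaster–Tarski form). -/
def lfpGamma (P : Prog Conc Pred Arg) : Interp Pred Arg :=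
  ⋂₀ {J | gamma P J ⊆ J}

/-- The weak dl-transform `wP_O^I`. -/
def weakReduct (P : Prog Conc Pred Arg) (I : Interp Pred Arg) : Prog Conc Pred Arg :=
  ⟨{r' | ∃ r ∈ P.rules,
      (∀ d : DLA Conc Pred Arg, Sum.inr d ∈ r.pos → d.sat I) ∧
      (∀ b ∈ r.neg, ¬ satB I b) ∧
      r' = ⟨r.head, {b ∈ r.pos | ∃ a, b = Sum.inl a}, ∅⟩}⟩

/-- The strong dl-transform `sP_O^I`. -/
def strongReduct (P : Prog Conc Pred Arg) (I : Interp Pred Arg) : Prog Conc Pred Arg :=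
  ⟨{r' | ∃ r ∈ P.rules,
      (∀ d : DLA Conc Pred Arg, Sum.inr d ∈ r.pos → ¬ d.Mono → d.sat I) ∧
      (∀ b ∈ r.neg, ¬ satB I b) ∧
      r' = ⟨r.head,
            {b ∈ r.pos | (∃ a, b = Sum.inl a) ∨ ∃ d : DLA Conc Pred Arg, b = Sum.inr d ∧ d.Mono},
            ∅⟩}⟩

/-- `I` is a weak answer set: the least model of the weak dl-transform. -/
def WeakAS (P : Prog Conc Pred Arg) (I : Interp Pred Arg) : Prop :=
  IsLeast {J | isModel (weakReduct P I) J} I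

/-- `I` is a strong answer set: the least model of the strong dl-transform. -/
def StrongAS (P : Prog Conc Pred Arg) (I : Interp Pred Arg) : Prop :=
  IsLeast {J | isModel (strongReduct P I) J} I

/-- A loop of a directed graph: a nonempty vertex set through which a cycle passes,
visiting only and all its nodes (i.e., strongly connected via nonempty paths inside `L`). -/
def IsLoop {α : Type} (E : α → α → Prop) (L : Set α) : Prop :=
  L.Nonempty ∧ ∀ u ∈ L, ∀ v ∈ L,
    Relation.TransGen (fun a b => E a b ∧ a ∈ L ∧ b ∈ L) u v

/-- A maximal loop. -/
def MaxLoop {α : Type} (E : α → α → Prop) (L : Set α) : Prop :=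
  IsLoop E L ∧ ∀ L', IsLoop E L' → L ⊆ L' → L' = L

/-- A terminating loop: a maximal loop from which no other maximal loop is reachable. -/
def TermLoop {α : Type} (E : α → α → Prop) (L : Set α) : Prop :=
  MaxLoop E L ∧ ∀ L', MaxLoop E L' → L' ≠ L →
    ∀ u ∈ L, ∀ v ∈ L', ¬ Relation.ReflTransGen E u v

/-- Edge relation of the weak positive dependency graph. -/
def edgeWeak (P : Prog Conc Pred Arg) (u v : Atom Pred Arg) : Prop :=
  ∃ r ∈ P.rules, r.head = u ∧ Sum.inl v ∈ r.pos

/-- The dl-atom mentions predicate `q` among its input predicates. -/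
def mentionsPred (d : DLA Conc Pred Arg) (q : Pred) : Prop :=
  ∃ S op, (S, op, q) ∈ d.inputs

/-- Edge relation of the strong positive dependency graph. -/
def edgeStrong (P : Prog Conc Pred Arg) (u v : Atom Pred Arg) : Prop :=
  ∃ r ∈ P.rules, r.head = u ∧
    (Sum.inl v ∈ r.pos ∨
     ∃ d : DLA Conc Pred Arg, Sum.inr d ∈ r.pos ∧ d.Mono ∧ mentionsPred d v.1)

/-- Satisfaction of the weak loop formula `wLF(L,K)` by `I` relative to `O`. -/
def satWLF (P : Prog Conc Pred Arg) (I : Interp Pred Arg) (L : Set (Atom Pred Arg)) : Prop :=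
  (∃ a ∈ L, a ∈ I) →
    ∃ r ∈ P.rules, r.head ∈ L ∧ (∀ a ∈ L, Sum.inl a ∉ r.pos) ∧ satBody I r

/-- Predicate extensions used by the irrelevant formula `IF(A,L)`: predicates occurring
in `L` are renamed to `p_L`, whose extension (under the extension `I'` of `I`) consists of
the `p`-atoms of `I \ L`; other predicates keep their extension in `I`. -/
def extIF (I L : Interp Pred Arg) : Pred → Set Arg := fun p =>
  {e | ((∃ e', (p, e') ∈ L) ∧ (p, e) ∈ I \ L) ∨ ((¬ ∃ e', (p, e') ∈ L) ∧ (p, e) ∈ I)}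

/-- `I' ⊨_O IF(A,L)`: the irrelevant formula of `A` relative to `L`, evaluated under
the extension `I'` of `I` satisfying the renamed-predicate axioms. -/
def satIF (A : DLA Conc Pred Arg) (I L : Interp Pred Arg) : Prop :=
  A.eval (extIF I L)

/-- Satisfaction of `γ(A, L)`-transformed positive body elements
(monotonic dl-atoms are replaced by their irrelevant formulas). -/
def satGammaB (I L : Interp Pred Arg) : BodyElem Conc Pred Arg → Prop
  | Sum.inl a => a ∈ I
  | Sum.inr d => (d.Mono → satIF d I L) ∧ (¬ d.Mono → d.sat I)

/-- Satisfaction of the strong loop formula `sLF(L,K)` by (the extension of) `I`. -/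
def satSLF (P : Prog Conc Pred Arg) (I : Interp Pred Arg) (L : Set (Atom Pred Arg)) : Prop :=
  (∃ a ∈ L, a ∈ I) →
    ∃ r ∈ P.rules, r.head ∈ L ∧ (∀ a ∈ L, Sum.inl a ∉ r.pos) ∧
      (∀ b ∈ r.pos, satGammaB I L b) ∧ (∀ b ∈ r.neg, ¬ satB I b)

/-- `v` is a positive (nonmonotonic) dependency of dl-atom `d`. -/
def posDep (d : DLA Conc Pred Arg) (v : Atom Pred Arg) : Prop :=
  ∃ I : Interp Pred Arg, ¬ d.sat I ∧ d.sat (I ∪ {v})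

/-- `v` is a negative (nonmonotonic) dependency of dl-atom `d`. -/
def negDep (d : DLA Conc Pred Arg) (v : Atom Pred Arg) : Prop :=
  ∃ I : Interp Pred Arg, d.sat I ∧ ¬ d.sat (I ∪ {v})

/-- Edge relation of the canonical dependency graph. -/
def edgeCanon (P : Prog Conc Pred Arg) (u v : Atom Pred Arg) : Prop :=
  ∃ r ∈ P.rules, r.head = u ∧
    ((∃ b ∈ r.pos, ∃ I : Interp Pred Arg, ¬ satB I b ∧ satB (I ∪ {v}) b) ∨
     (∃ b ∈ r.neg, ∃ I : Interp Pred Arg, satB I b ∧ ¬ satB (I ∪ {v}) b))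

/-- Predicate extensions for the positive canonical irrelevant formula `pCF(A,L)`:
only predicates having an atom in `L` that is a positive dependency of `A` are renamed. -/
def extPCF (d : DLA Conc Pred Arg) (I L : Interp Pred Arg) : Pred → Set Arg := fun p =>
  {e | ((∃ e', (p, e') ∈ L ∧ posDep d (p, e')) ∧ (p, e) ∈ I \ L) ∨
       ((¬ ∃ e', (p, e') ∈ L ∧ posDep d (p, e')) ∧ (p, e) ∈ I)}

/-- Predicate extensions for the negative canonical irrelevant formula `nCF(A,L)`. -/
def extNCF (d : DLA Conc Pred Arg) (I L : Interp Pred Arg) : Pred → Set Arg := fun p =>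
  {e | ((∃ e', (p, e') ∈ L ∧ negDep d (p, e')) ∧ (p, e) ∈ I \ L) ∨
       ((¬ ∃ e', (p, e') ∈ L ∧ negDep d (p, e')) ∧ (p, e) ∈ I)}

/-- `I' ⊨_O pCF(A,L)`. -/
def satPCF (d : DLA Conc Pred Arg) (I L : Interp Pred Arg) : Prop := d.eval (extPCF d I L)

/-- `I' ⊨_O nCF(A,L)`. -/
def satNCF (d : DLA Conc Pred Arg) (I L : Interp Pred Arg) : Prop := d.eval (extNCF d I L)

/-- `δ₁(A,L)`: nonmonotonic dl-atoms are replaced by `pCF(A,L)`; otherwise `γ(A,L)`. -/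
def satDelta1 (I L : Interp Pred Arg) : BodyElem Conc Pred Arg → Prop
  | Sum.inl a => a ∈ I
  | Sum.inr d => (¬ d.Mono → satPCF d I L) ∧ (d.Mono → satIF d I L)

/-- `δ₂(B,L)`: nonmonotonic dl-atoms are replaced by `nCF(B,L)`; otherwise unchanged. -/
def satDelta2 (I L : Interp Pred Arg) : BodyElem Conc Pred Arg → Prop
  | Sum.inl a => a ∈ I
  | Sum.inr d => (¬ d.Mono → satNCF d I L) ∧ (d.Mono → d.sat I)

/-- Satisfaction of the canonical loop formula `cLF(L,M,K)` by (the extension of) `I`. -/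
def satCLF (P : Prog Conc Pred Arg) (I M : Interp Pred Arg) (L : Set (Atom Pred Arg)) : Prop :=
  (∃ a ∈ L, a ∈ I) →
    ∃ r ∈ P.rules, r.head ∈ L ∧ (∀ a ∈ L, Sum.inl a ∉ r.pos) ∧ satBody M r ∧
      (∀ b ∈ r.pos, satDelta1 I L b) ∧ (∀ b ∈ r.neg, ¬ satDelta2 I L b)

/-- `I` is a canonical answer set of the dl-program. -/
def CanonAS (P : Prog Conc Pred Arg) (I : Interp Pred Arg) : Prop :=
  satComp P I ∧ ∀ L, IsLoop (edgeCanon P) L → satCLF P I I L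

/-- A normal logic program: all body elements are ordinary atoms. -/
def Normal (P : Prog Conc Pred Arg) : Prop :=
  ∀ r ∈ P.rules, ∀ b ∈ r.pos ∪ r.neg, ∃ a : Atom Pred Arg, b = Sum.inl a

/-- The Gelfond–Lifschitz-style reduct: delete rules with a satisfied negated body
member, and delete all negated members from remaining rules. -/
def glReduct (P : Prog Conc Pred Arg) (I : Interp Pred Arg) : Prog Conc Pred Arg :=
  ⟨{r' | ∃ r ∈ P.rules, (∀ b ∈ r.neg, ¬ satB I b) ∧ r' = ⟨r.head, r.pos, ∅⟩}⟩


section AuxProof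
variable {Conc Pred Arg : Type}

lemma eval_mono' {d : DLA Conc Pred Arg}
    (hnom : ∀ S p, (S, Op.ominus, p) ∉ d.inputs) (hent : Monotone d.entails)
    {e1 e2 : Pred → Set Arg} (h : ∀ p, e1 p ⊆ e2 p) (hev : d.eval e1) : d.eval e2 := by
  refine hent (fun x hx => ?_) hev
  obtain ⟨c, hc, hxc⟩ := hx
  refine ⟨c, hc, ?_⟩
  obtain ⟨S, op, p⟩ := c
  cases op with
  | oplus =>
      obtain ⟨e, he, rfl⟩ := hxc
      exact ⟨e, h p he, rfl⟩
  | odot =>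
      obtain ⟨e, he, rfl⟩ := hxc
      exact ⟨e, h p he, rfl⟩
  | ominus => exact absurd hc (hnom S p)

lemma mono_of_no_ominus {d : DLA Conc Pred Arg}
    (hnom : ∀ S p, (S, Op.ominus, p) ∉ d.inputs) (hent : Monotone d.entails) : d.Mono :=
  fun _ _ hIJ hs => eval_mono' hnom hent (fun _ _ he => hIJ he) hs

lemma extIF_eq (I L : Interp Pred Arg) : extIF I L = extOf (I \ L) := by
  funext p; ext e
  constructor
  · rintro (⟨_, h⟩ | ⟨hno, hI⟩)
    · exact h
    · exact ⟨hI, fun hL => hno ⟨e, hL⟩⟩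
  · intro h
    by_cases hp : ∃ e', (p, e') ∈ L
    · exact Or.inl ⟨hp, h⟩
    · exact Or.inr ⟨hp, h.1⟩

lemma satIF_iff (d : DLA Conc Pred Arg) (I L : Interp Pred Arg) :
    satIF d I L ↔ d.sat (I \ L) := by
  unfold satIF DLA.sat
  rw [extIF_eq]

lemma flip_lemma {α : Type} (P : Set α → Prop) :
    ∀ n (B A : Set α), B.Finite → (B \ A).ncard ≤ n → A ⊆ B → ¬ P A → P B →
      ∃ J v, v ∈ B \ A ∧ ¬ P J ∧ P (J ∪ {v}) := by
  intro n
  induction n with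
  | zero =>
      intro B A hfin hcard hAB hA hB
      have h0 : B \ A = ∅ :=
        (Set.ncard_eq_zero (hfin.diff)).mp (Nat.le_zero.mp hcard)
      have hBA : B = A := subset_antisymm (Set.diff_eq_empty.mp h0) hAB
      exact absurd (hBA ▸ hB) hA
  | succ n ih =>
      intro B A hfin hcard hAB hA hB
      by_cases hE : B \ A = ∅
      · have hBA : B = A := subset_antisymm (Set.diff_eq_empty.mp hE) hAB
        exact absurd (hBA ▸ hB) hA
      · obtain ⟨v, hv⟩ := Set.nonempty_iff_ne_empty.mpr hE
        by_cases h' : P (B \ {v})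
        · have hsub : A ⊆ B \ {v} := by
            intro y hy
            refine ⟨hAB hy, ?_⟩
            intro h
            rw [Set.mem_singleton_iff] at h
            exact hv.2 (h ▸ hy)
          have hss : (B \ {v}) \ A ⊂ B \ A := by
            refine (Set.ssubset_iff_of_subset (Set.diff_subset_diff_left Set.diff_subset)).mpr
              ⟨v, hv, fun hc => hc.1.2 rfl⟩
          have hcard' : ((B \ {v}) \ A).ncard ≤ n := by
            have := Set.ncard_lt_ncard hss (hfin.diff)
            omega
          obtain ⟨J, w, hw, h1, h2⟩ := ih (B \ {v}) A (hfin.diff) hcard' hsub hA h'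
          exact ⟨J, w, ⟨hw.1.1, hw.2⟩, h1, h2⟩
        · refine ⟨B \ {v}, v, hv, h', ?_⟩
          have hU : (B \ {v}) ∪ {v} = B := by
            rw [Set.diff_union_self,
              Set.union_eq_self_of_subset_right (Set.singleton_subset_iff.mpr hv.1)]
          rw [hU]; exact hB

lemma flip_lemma' {α : Type} (P : Set α → Prop) (A B : Set α) (hfin : B.Finite)
    (hAB : A ⊆ B) (hA : ¬ P A) (hB : P B) :
    ∃ J v, v ∈ B \ A ∧ ¬ P J ∧ P (J ∪ {v}) :=
  flip_lemma P (B \ A).ncard B A hfin le_rfl hAB hA hB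

lemma pos_sep_eq {K : Prog Conc Pred Arg}
    (hno : ∀ r ∈ K.rules, ∀ d : DLA Conc Pred Arg, Sum.inr d ∈ r.pos ∪ r.neg →
      (∀ S p, (S, Op.ominus, p) ∉ d.inputs) ∧ Monotone d.entails)
    {r : Rule Conc Pred Arg} (hr : r ∈ K.rules) :
    {b ∈ r.pos | (∃ a, b = Sum.inl a) ∨ ∃ d : DLA Conc Pred Arg, b = Sum.inr d ∧ d.Mono}
      = r.pos := by
  ext b
  refine ⟨fun h => h.1, fun h => ⟨h, ?_⟩⟩
  cases b with
  | inl a => exact Or.inl ⟨a, rfl⟩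
  | inr d =>
      have hm := hno r hr d (Or.inl h)
      exact Or.inr ⟨d, rfl, mono_of_no_ominus hm.1 hm.2⟩

lemma dMono {K : Prog Conc Pred Arg}
    (hno : ∀ r ∈ K.rules, ∀ d : DLA Conc Pred Arg, Sum.inr d ∈ r.pos ∪ r.neg →
      (∀ S p, (S, Op.ominus, p) ∉ d.inputs) ∧ Monotone d.entails)
    {r : Rule Conc Pred Arg} (hr : r ∈ K.rules) {d : DLA Conc Pred Arg}
    (hd : Sum.inr d ∈ r.pos ∪ r.neg) : d.Mono :=
  mono_of_no_ominus (hno r hr d hd).1 (hno r hr d hd).2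

lemma reduct_mem {K : Prog Conc Pred Arg} {I : Interp Pred Arg}
    (hno : ∀ r ∈ K.rules, ∀ d : DLA Conc Pred Arg, Sum.inr d ∈ r.pos ∪ r.neg →
      (∀ S p, (S, Op.ominus, p) ∉ d.inputs) ∧ Monotone d.entails)
    {r : Rule Conc Pred Arg} (hr : r ∈ K.rules)
    (hneg : ∀ b ∈ r.neg, ¬ satB I b) :
    (⟨r.head, r.pos, ∅⟩ : Rule Conc Pred Arg) ∈ (strongReduct K I).rules := by
  refine ⟨r, hr, fun d hd hnm => absurd (dMono hno hr (Or.inl hd)) hnm, hneg, ?_⟩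
  rw [pos_sep_eq hno hr]

lemma reduct_elim {K : Prog Conc Pred Arg} {I : Interp Pred Arg}
    (hno : ∀ r ∈ K.rules, ∀ d : DLA Conc Pred Arg, Sum.inr d ∈ r.pos ∪ r.neg →
      (∀ S p, (S, Op.ominus, p) ∉ d.inputs) ∧ Monotone d.entails)
    {r' : Rule Conc Pred Arg} (hr' : r' ∈ (strongReduct K I).rules) :
    ∃ r ∈ K.rules, (∀ b ∈ r.neg, ¬ satB I b) ∧ r' = ⟨r.head, r.pos, ∅⟩ := by
  obtain ⟨r, hr, _, hneg, rfl⟩ := hr'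
  exact ⟨r, hr, hneg, by rw [pos_sep_eq hno hr]⟩

lemma satB_mono {K : Prog Conc Pred Arg}
    (hno : ∀ r ∈ K.rules, ∀ d : DLA Conc Pred Arg, Sum.inr d ∈ r.pos ∪ r.neg →
      (∀ S p, (S, Op.ominus, p) ∉ d.inputs) ∧ Monotone d.entails)
    {r : Rule Conc Pred Arg} (hr : r ∈ K.rules) {b : BodyElem Conc Pred Arg}
    (hb : b ∈ r.pos) {J J' : Interp Pred Arg} (hJJ : J ⊆ J') (h : satB J b) :
    satB J' b := by
  cases b with
  | inl a => exact hJJ h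
  | inr d => exact dMono hno hr (Or.inl hb) hJJ h

end AuxProof

/-- If K mentions no occurrence of the constraining operator ⊖
(so, the underlying entailment being classical/monotone, all dl-atoms of P are
monotonic), then I is a canonical answer set of K iff I is a strong answer set of K. -/
theorem stmt18 {Conc Pred Arg : Type} [Fintype Pred] [Fintype Arg]
    (K : Prog Conc Pred Arg)
    (hno : ∀ r ∈ K.rules, ∀ d : DLA Conc Pred Arg, Sum.inr d ∈ r.pos ∪ r.neg →
      (∀ S p, (S, Op.ominus, p) ∉ d.inputs) ∧ Monotone d.entails)
    (I : Interp Pred Arg) :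
    CanonAS K I ↔ StrongAS K I := by
  constructor
  · -- Canonical ⇒ Strong
    rintro ⟨hComp, hLoops⟩
    set R := strongReduct K I with hRdef
    set M := ⋂₀ {J | isModel R J} with hMdef
    have hImod : isModel R I := by
      intro r' hr' hbody
      obtain ⟨r, hr, hneg, rfl⟩ := reduct_elim hno hr'
      exact (hComp r.head).mpr ⟨r, hr, rfl, hbody.1, hneg⟩
    have hMmod : isModel R M := by
      intro r' hr' hbody
      refine Set.mem_sInter.mpr (fun J hJ => ?_)
      have hMJ : M ⊆ J := Set.sInter_subset_of_mem hJ
      obtain ⟨r, hr, hneg, rfl⟩ := reduct_elim hno hr'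
      exact hJ (⟨r.head, r.pos, ∅⟩ : Rule Conc Pred Arg) hr' ⟨fun b hb => satB_mono hno hr hb hMJ (hbody.1 b hb),
        fun b hb => absurd hb (Set.notMem_empty b)⟩
    have hMI : M ⊆ I := Set.sInter_subset_of_mem hImod
    have hsucc : ∀ y ∈ I \ M, ∃ v ∈ I \ M, edgeCanon K y v := by
      intro y hy
      obtain ⟨r, hr, hhead, hbody⟩ := (hComp y).mp hy.1
      have hr' := reduct_mem hno hr hbody.2
      have hnotall : ¬ ∀ b ∈ r.pos, satB M b := by
        intro hall
        exact hy.2 (hhead ▸ hMmod (⟨r.head, r.pos, ∅⟩ : Rule Conc Pred Arg) hr'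
          ⟨hall, fun b hb => absurd hb (Set.notMem_empty b)⟩)
      push_neg at hnotall
      obtain ⟨b, hb, hbM⟩ := hnotall
      have hbI : satB I b := hbody.1 b hb
      cases b with
      | inl a =>
          exact ⟨a, ⟨hbI, hbM⟩, r, hr, hhead, Or.inl ⟨Sum.inl a, hb, ∅,
            Set.notMem_empty a, Set.mem_union_right _ rfl⟩⟩
      | inr d =>
          obtain ⟨J, v, hv, h1, h2⟩ :=
            flip_lemma' (fun J => d.sat J) M I (Set.toFinite I) hMI hbM hbI
          exact ⟨v, hv, r, hr, hhead, Or.inl ⟨Sum.inr d, hb, J, h1, h2⟩⟩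
    have hIM : I ⊆ M := by
      by_contra hns
      obtain ⟨y0, hy0I, hy0M⟩ := Set.not_subset.mp hns
      set E' := fun a b => edgeCanon K a b ∧ a ∈ I \ M ∧ b ∈ I \ M with hE'def
      obtain ⟨x₀, hx₀X, hmin⟩ := Set.exists_min_image (I \ M)
        (fun y => {z | Relation.ReflTransGen E' y z}.ncard)
        (Set.toFinite _) ⟨y0, hy0I, hy0M⟩
      set L := {y | Relation.ReflTransGen E' x₀ y ∧ y ∈ I \ M} with hLdef
      have hx₀L : x₀ ∈ L := ⟨Relation.ReflTransGen.refl, hx₀X⟩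
      have hclosed : ∀ y ∈ L, ∀ v ∈ I \ M, edgeCanon K y v → v ∈ L :=
        fun y hy v hvX he => ⟨hy.1.tail ⟨he, hy.2, hvX⟩, hvX⟩
      have hback : ∀ y ∈ L, Relation.ReflTransGen E' y x₀ := by
        intro y hy
        by_contra hnot
        have hsub : {z | Relation.ReflTransGen E' y z}
            ⊆ {z | Relation.ReflTransGen E' x₀ z} := fun z hz => hy.1.trans hz
        have hss := (Set.ssubset_iff_of_subset hsub).mpr
          ⟨x₀, Relation.ReflTransGen.refl, hnot⟩
        have h1 := Set.ncard_lt_ncard hss (Set.toFinite _)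
        have h2 := hmin y hy.2
        omega
      have hpath : ∀ z₁ z₂, Relation.ReflTransGen E' z₁ z₂ →
          Relation.ReflTransGen E' x₀ z₁ →
          Relation.ReflTransGen (fun a b => edgeCanon K a b ∧ a ∈ L ∧ b ∈ L) z₁ z₂ := by
        intro z₁ z₂ h
        induction h with
        | refl => exact fun _ => Relation.ReflTransGen.refl
        | tail h' e ih =>
            intro hx
            exact (ih hx).tail ⟨e.1, ⟨hx.trans h', e.2.1⟩, ⟨(hx.trans h').tail e, e.2.2⟩⟩
      have hloop : IsLoop (edgeCanon K) L := by
        refine ⟨⟨x₀, hx₀L⟩, fun u hu v hv => ?_⟩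
        obtain ⟨w, hwX, hew⟩ := hsucc u hu.2
        have hwL : w ∈ L := hclosed u hu w hwX hew
        exact Relation.TransGen.head' ⟨hew, hu, hwL⟩
          (hpath w v ((hback w hwL).trans hv.1) hwL.1)
      obtain ⟨r, hr, hheadL, hnopos, hbodyI, hd1, _⟩ :=
        hLoops L hloop ⟨x₀, hx₀L, hx₀X.1⟩
      have hposM : ∀ b ∈ r.pos, satB M b := by
        intro b hb
        cases b with
        | inl a =>
            have hδ := hd1 (Sum.inl a) hb
            simp only [satDelta1] at hδ
            have haL : a ∉ L := fun haL => hnopos a haL hb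
            by_contra haM
            have hedge : edgeCanon K r.head a := ⟨r, hr, rfl, Or.inl ⟨Sum.inl a, hb, ∅,
              Set.notMem_empty a, Set.mem_union_right _ rfl⟩⟩
            exact haL (hclosed r.head hheadL a ⟨hδ, haM⟩ hedge)
        | inr d =>
            have hdm : d.Mono := dMono hno hr (Or.inl hb)
            have hδ := hd1 (Sum.inr d) hb
            simp only [satDelta1] at hδ
            have hIF : d.sat (I \ L) := (satIF_iff d I L).mp (hδ.2 hdm)
            show d.sat M
            by_contra hdM
            have hML : M ⊆ I \ L := fun m hm' => ⟨hMI hm', fun hmL => hmL.2.2 hm'⟩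
            obtain ⟨J, v, hv, h1, h2⟩ :=
              flip_lemma' (fun J => d.sat J) M (I \ L) (Set.toFinite _) hML hdM hIF
            have hedge : edgeCanon K r.head v :=
              ⟨r, hr, rfl, Or.inl ⟨Sum.inr d, hb, J, h1, h2⟩⟩
            exact hv.1.2 (hclosed r.head hheadL v ⟨hv.1.1, hv.2⟩ hedge)
      have hheadM : r.head ∈ M := hMmod (⟨r.head, r.pos, ∅⟩ : Rule Conc Pred Arg) (reduct_mem hno hr hbodyI.2)
        ⟨hposM, fun b hb => absurd hb (Set.notMem_empty b)⟩
      exact hheadL.2.2 hheadM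
    exact ⟨hImod, fun J hJ => hIM.trans (Set.sInter_subset_of_mem hJ)⟩
  · -- Strong ⇒ Canonical
    rintro ⟨hImod, hleast⟩
    constructor
    · -- completion
      intro h
      constructor
      · intro hhI
        by_contra hnos
        push_neg at hnos
        have hmod' : isModel (strongReduct K I) (I \ {h}) := by
          intro r' hr' hbody
          obtain ⟨r, hr, hneg, rfl⟩ := reduct_elim hno hr'
          have hposI : ∀ b ∈ r.pos, satB I b :=
            fun b hb => satB_mono hno hr hb Set.diff_subset (hbody.1 b hb)
          have hheadI : r.head ∈ I := hImod (⟨r.head, r.pos, ∅⟩ : Rule Conc Pred Arg) hr'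
            ⟨hposI, fun b hb => absurd hb (Set.notMem_empty b)⟩
          refine ⟨hheadI, fun hh => ?_⟩
          rw [Set.mem_singleton_iff] at hh
          exact hnos r hr hh ⟨hposI, hneg⟩
        exact ((hleast hmod') hhI).2 rfl
      · rintro ⟨r, hr, hhead, hbody⟩
        exact hhead ▸ hImod (⟨r.head, r.pos, ∅⟩ : Rule Conc Pred Arg) (reduct_mem hno hr hbody.2)
          ⟨fun b hb => hbody.1 b hb, fun b hb => absurd hb (Set.notMem_empty b)⟩
    · -- canonical loop formulas
      intro L _ hex
      by_cases hJm : isModel (strongReduct K I) (I \ L)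
      · obtain ⟨a, haL, haI⟩ := hex
        exact absurd haL ((hleast hJm) haI).2
      · simp only [isModel, not_forall] at hJm
        obtain ⟨r', hr', hbody, hhead⟩ := hJm
        obtain ⟨r, hr, hneg, rfl⟩ := reduct_elim hno hr'
        have hposJ : ∀ b ∈ r.pos, satB (I \ L) b := hbody.1
        have hposI : ∀ b ∈ r.pos, satB I b :=
          fun b hb => satB_mono hno hr hb Set.diff_subset (hposJ b hb)
        have hheadI : r.head ∈ I := hImod (⟨r.head, r.pos, ∅⟩ : Rule Conc Pred Arg) hr'
          ⟨hposI, fun b hb => absurd hb (Set.notMem_empty b)⟩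
        have hheadL : r.head ∈ L := by
          by_contra hc
          exact hhead ⟨hheadI, hc⟩
        refine ⟨r, hr, hheadL, ?_, ⟨hposI, hneg⟩, ?_, ?_⟩
        · intro a haL hpos
          exact (hposJ (Sum.inl a) hpos).2 haL
        · intro b hb
          cases b with
          | inl a =>
              simp only [satDelta1]
              exact (hposJ (Sum.inl a) hb).1
          | inr d =>
              simp only [satDelta1]
              refine ⟨fun hnm => absurd (dMono hno hr (Or.inl hb)) hnm, fun _ => ?_⟩
              exact (satIF_iff d I L).mpr (hposJ (Sum.inr d) hb)
        · intro b hb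
          cases b with
          | inl a =>
              simp only [satDelta2]
              exact hneg (Sum.inl a) hb
          | inr d =>
              simp only [satDelta2]
              intro hP
              exact hneg (Sum.inr d) hb (hP.2 (dMono hno hr (Or.inr hb)))
end DLP
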